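/- If given a variable y the components x_1,...,x_n are conditionally independent (p(X|y) = ∏_i p(x_i|y)), then TC(X) = Σ_{i=1}^n I(x_i; y) − I(X; y). -/

import Mathlib

/-- Probability of the event `f = b` under weight function `μ` (the pmf of `f`). -/
noncomputable def margPMF {Ω β : Type*} [Fintype Ω] [DecidableEq β]
    (μ : Ω → ℝ) (f : Ω → β) (b : β) : ℝ :=
  ∑ ω, if f ω = b then μ ω else 0

/-- Joint pmf of the family of random variables `x`. -/
noncomputable def jointPMF {Ω ι α : Type*} [Fintype Ω] [Fintype ι] [DecidableEq ι]
    [DecidableEq α] (μ : Ω → ℝ) (x : ι → Ω → α) (v : ι → α) : ℝ :=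
  margPMF μ (fun ω i => x i ω) v

/-- Total correlation: expectation of the log-ratio of the joint pmf to the
product of marginal pmfs. -/
noncomputable def totalCorr {Ω ι α : Type*} [Fintype Ω] [Fintype ι] [DecidableEq ι]
    [DecidableEq α] (μ : Ω → ℝ) (x : ι → Ω → α) : ℝ :=
  ∑ ω, μ ω * Real.log (jointPMF μ x (fun i => x i ω) / ∏ i, margPMF μ (x i) (x i ω))

/-- Mutual information between random variables `u` and `v`. -/
noncomputable def MI {Ω β γ : Type*} [Fintype Ω] [DecidableEq β] [DecidableEq γ]
    (μ : Ω → ℝ) (u : Ω → β) (v : Ω → γ) : ℝ :=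
  ∑ ω, μ ω * Real.log (margPMF μ (fun ω => (u ω, v ω)) (u ω, v ω) /
    (margPMF μ u (u ω) * margPMF μ v (v ω)))


lemma margPMF_pos {Ω β : Type*} [Fintype Ω] [DecidableEq β]
    (μ : Ω → ℝ) (hμ : ∀ ω, 0 ≤ μ ω) (f : Ω → β) (ω : Ω) (hω : 0 < μ ω) :
    0 < margPMF μ f (f ω) := by
  have h : μ ω ≤ margPMF μ f (f ω) := by
    unfold margPMF
    have := Finset.single_le_sum (f := fun ω' => if f ω' = f ω then μ ω' else 0)
      (fun i _ => by split <;> simp [hμ i]) (Finset.mem_univ ω)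
    simpa using this
  linarith

/-- **Conditional-independence TC formula (Poole et al.).** If, given `y`, the
variables `x_1, …, x_n` are conditionally independent
(`p(X|y) = ∏_i p(x_i|y)` for every `y`-value of positive probability), then
`TC(X) = Σ_i I(x_i; y) − I(X; y)`. -/
theorem tc_of_cond_indep {Ω ι α β : Type*} [Fintype Ω] [Fintype ι] [DecidableEq ι]
    [DecidableEq α] [DecidableEq β]
    (μ : Ω → ℝ) (hμ : ∀ ω, 0 ≤ μ ω) (hsum : ∑ ω, μ ω = 1)
    (x : ι → Ω → α) (y : Ω → β)
    (hci : ∀ b : β, 0 < margPMF μ y b → ∀ v : ι → α,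
      margPMF μ (fun ω => ((fun i => x i ω), y ω)) (v, b) / margPMF μ y b =
        ∏ i, margPMF μ (fun ω => (x i ω, y ω)) (v i, b) / margPMF μ y b) :
    totalCorr μ x = (∑ i, MI μ (x i) y) - MI μ (fun ω => fun i => x i ω) y := by
  unfold totalCorr MI
  rw [Finset.sum_comm, ← Finset.sum_sub_distrib]
  apply Finset.sum_congr rfl
  intro ω _
  rw [← Finset.mul_sum, ← mul_sub]
  rcases eq_or_lt_of_le (hμ ω) with h0 | hpos
  · rw [← h0]; ring
  congr 1
  have hY : 0 < margPMF μ y (y ω) := margPMF_pos μ hμ y ω hpos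
  have hXY : 0 < margPMF μ (fun ω => ((fun i => x i ω), y ω)) ((fun i => x i ω), y ω) :=
    margPMF_pos μ hμ (fun ω => ((fun i => x i ω), y ω)) ω hpos
  have hXiY : ∀ i, 0 < margPMF μ (fun ω => (x i ω, y ω)) (x i ω, y ω) :=
    fun i => margPMF_pos μ hμ (fun ω => (x i ω, y ω)) ω hpos
  have hXi : ∀ i, 0 < margPMF μ (x i) (x i ω) := fun i => margPMF_pos μ hμ (x i) ω hpos
  have hX : 0 < jointPMF μ x (fun i => x i ω) :=
    margPMF_pos μ hμ (fun ω i => x i ω) ω hpos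
  have key := congrArg Real.log (hci (y ω) hY (fun i => x i ω))
  rw [Real.log_div hXY.ne' hY.ne',
    Real.log_prod (fun i _ => (div_pos (hXiY i) hY).ne')] at key
  have key2 : ∀ i, Real.log (margPMF μ (fun ω => (x i ω, y ω)) (x i ω, y ω) / margPMF μ y (y ω))
      = Real.log (margPMF μ (fun ω => (x i ω, y ω)) (x i ω, y ω)) - Real.log (margPMF μ y (y ω)) :=
    fun i => Real.log_div (hXiY i).ne' hY.ne'
  rw [Finset.sum_congr rfl (fun i _ => key2 i), Finset.sum_sub_distrib,
    Finset.sum_const, Finset.card_univ, nsmul_eq_mul] at key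
  have hs : ∀ i, Real.log (margPMF μ (fun ω => (x i ω, y ω)) (x i ω, y ω) /
        (margPMF μ (x i) (x i ω) * margPMF μ y (y ω)))
      = Real.log (margPMF μ (fun ω => (x i ω, y ω)) (x i ω, y ω))
        - Real.log (margPMF μ (x i) (x i ω)) - Real.log (margPMF μ y (y ω)) := by
    intro i
    rw [Real.log_div (hXiY i).ne' (mul_pos (hXi i) hY).ne', Real.log_mul (hXi i).ne' hY.ne']
    ring
  have hJ : margPMF μ (fun ω (i : ι) => x i ω) ((fun ω i => x i ω) ω)
      = jointPMF μ x (fun i => x i ω) := rfl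
  rw [Finset.sum_congr rfl (fun i _ => hs i), Finset.sum_sub_distrib, Finset.sum_sub_distrib,
    Finset.sum_const, Finset.card_univ, nsmul_eq_mul,
    Real.log_div hX.ne' (Finset.prod_pos (fun i _ => hXi i)).ne',
    Real.log_prod (fun i _ => (hXi i).ne'), hJ,
    Real.log_div hXY.ne' (mul_pos hX hY).ne', Real.log_mul hX.ne' hY.ne']
  linarith [key]
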